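/- Let X be a normed space with 0 ∈ int F for a closed convex set F ⊆ X, and Q ⊆ X nonempty closed. Then the minimal time function T_Q^F is ℓ-Lipschitz on X, where ℓ = inf{1/r : B(0;r) ⊆ F, r > 0}. -/

import Mathlib

open scoped ENNReal Pointwise

/-- The minimal time function `T_Q^F`. -/
noncomputable def minTime {X : Type*} [NormedAddCommGroup X] [NormedSpace ℝ X]
    (F Q : Set X) (x : X) : ℝ≥0∞ :=
  sInf (ENNReal.ofReal '' {t : ℝ | 0 ≤ t ∧ ∃ f ∈ F, x + t • f ∈ Q})

theorem minTime_lipschitz {X : Type*} [NormedAddCommGroup X] [NormedSpace ℝ X]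
    (F : Set X) (hFcl : IsClosed F) (hFconv : Convex ℝ F)
    (h0F : (0 : X) ∈ interior F)
    (Q : Set X) (hQne : Q.Nonempty) (hQcl : IsClosed Q)
    (ℓ : ℝ) (hℓ : ℓ = sInf {l : ℝ | ∃ r : ℝ, 0 < r ∧ Metric.closedBall (0 : X) r ⊆ F ∧ l = 1 / r}) :
    (∀ x : X, minTime F Q x ≠ ⊤) ∧
    (∀ x y : X, |(minTime F Q x).toReal - (minTime F Q y).toReal| ≤ ℓ * ‖x - y‖) := by
  subst hℓ
  set L : Set ℝ := {l : ℝ | ∃ r : ℝ, 0 < r ∧ Metric.closedBall (0 : X) r ⊆ F ∧ l = 1 / r}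
    with hLdef
  set S : X → Set ℝ := fun x => {t : ℝ | 0 ≤ t ∧ ∃ f ∈ F, x + t • f ∈ Q} with hSdef
  obtain ⟨q, hq⟩ := hQne
  obtain ⟨ε, hε, hball⟩ := Metric.mem_nhds_iff.mp (mem_interior_iff_mem_nhds.mp h0F)
  have hr0 : 0 < ε / 2 := half_pos hε
  have hball0 : Metric.closedBall (0 : X) (ε / 2) ⊆ F :=
    (Metric.closedBall_subset_ball (half_lt_self hε)).trans hball
  have h0F' : (0 : X) ∈ F := interior_subset h0F
  have hLne : L.Nonempty := ⟨1 / (ε / 2), ε / 2, hr0, hball0, rfl⟩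
  have hLbdd : BddBelow L := by
    refine ⟨0, fun l hl => ?_⟩
    obtain ⟨r, hr, _, rfl⟩ := hl
    positivity
  -- S is nonempty
  have hSne : ∀ x, (S x).Nonempty := by
    intro x
    by_cases hqx : q = x
    · exact ⟨0, le_refl 0, 0, h0F', by simpa [hqx] using hq⟩
    · have hd : 0 < ‖q - x‖ := by
        exact norm_sub_pos_iff.mpr hqx
      refine ⟨‖q - x‖ / (ε / 2), div_nonneg (norm_nonneg _) hr0.le,
        ((ε / 2) / ‖q - x‖) • (q - x), hball0 ?_, ?_⟩
      · rw [Metric.mem_closedBall, dist_zero_right, norm_smul, Real.norm_eq_abs,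
          abs_of_pos (div_pos hr0 hd)]
        rw [div_mul_cancel₀ _ hd.ne']
      · have h1 : (‖q - x‖ / (ε / 2)) • ((ε / 2) / ‖q - x‖) • (q - x) = q - x := by
          rw [smul_smul]
          have : ‖q - x‖ / (ε / 2) * ((ε / 2) / ‖q - x‖) = 1 := by
            field_simp
          rw [this, one_smul]
        rw [h1]
        have : x + (q - x) = q := by abel
        rw [this]; exact hq
  have hSbdd : ∀ x, BddBelow (S x) := fun x => ⟨0, fun t ht => ht.1⟩
  have hSnn : ∀ x, 0 ≤ sInf (S x) := fun x => le_csInf (hSne x) fun t ht => ht.1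
  -- minTime equals ofReal of the real infimum
  have hmt : ∀ x, minTime F Q x = ENNReal.ofReal (sInf (S x)) := by
    intro x
    have hmono : Monotone ENNReal.ofReal := fun _ _ h => ENNReal.ofReal_le_ofReal h
    have := hmono.map_csInf_of_continuousAt
      (ENNReal.continuous_ofReal.continuousAt) (hSne x) (hSbdd x)
    rw [minTime, ← this]
  -- key translation lemma
  have hkey : ∀ x y : X, ∀ t ∈ S y, ∀ r : ℝ, 0 < r → Metric.closedBall (0 : X) r ⊆ F →
      t + ‖x - y‖ / r ∈ S x := by
    intro x y t ht r hr hrF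
    obtain ⟨ht0, f, hf, hyf⟩ := ht
    by_cases hxy : x = y
    · subst hxy
      simpa using ⟨ht0, f, hf, hyf⟩
    · have hd : 0 < ‖x - y‖ := by exact norm_sub_pos_iff.mpr hxy
      set d := ‖x - y‖ with hddef
      set s := t + d / r with hsdef
      have hspos : 0 < s := add_pos_of_nonneg_of_pos ht0 (div_pos hd hr)
      have hmem : (r / d) • (y - x) ∈ F := by
        apply hrF
        rw [Metric.mem_closedBall, dist_zero_right, norm_smul, Real.norm_eq_abs,
          abs_of_pos (div_pos hr hd)]
        have : ‖y - x‖ = d := by rw [hddef, norm_sub_rev]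
        rw [this, div_mul_cancel₀ _ hd.ne']
      refine ⟨hspos.le, (t / s) • f + ((d / r) / s) • ((r / d) • (y - x)), ?_, ?_⟩
      · refine hFconv hf hmem (div_nonneg ht0 hspos.le)
          (div_nonneg (div_nonneg hd.le hr.le) hspos.le) ?_
        rw [← add_div, ← hsdef, div_self hspos.ne']
      · have h1 : s • ((t / s) • f + ((d / r) / s) • ((r / d) • (y - x)))
            = t • f + (y - x) := by
          rw [smul_add, smul_smul, smul_smul, smul_smul]
          have e1 : s * (t / s) = t := by field_simp
          have e2 : s * (d / r / s) * (r / d) = 1 := by field_simp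
          rw [e1, mul_assoc, ← mul_assoc, e2, one_smul]
        rw [h1]
        have : x + (t • f + (y - x)) = y + t • f := by abel
        rw [this]; exact hyf
  -- core inequality
  have hcore : ∀ x y : X, sInf (S x) ≤ sInf (S y) + sInf L * ‖x - y‖ := by
    intro x y
    have hstep : ∀ t ∈ S y, sInf (S x) - sInf L * ‖x - y‖ ≤ t := by
      intro t ht
      by_cases hxy : x = y
      · subst hxy
        have h1 := csInf_le (hSbdd x) ht
        simp only [sub_self, norm_zero, mul_zero]
        linarith
      · have hd : 0 < ‖x - y‖ := by exact norm_sub_pos_iff.mpr hxy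
        have key2 : (sInf (S x) - t) / ‖x - y‖ ≤ sInf L := by
          refine le_csInf hLne ?_
          rintro l ⟨r, hr, hrF, rfl⟩
          have h1 : sInf (S x) ≤ t + ‖x - y‖ / r :=
            csInf_le (hSbdd x) (hkey x y t ht r hr hrF)
          rw [div_le_div_iff₀ hd hr]
          have h2 : (sInf (S x) - t) * r ≤ ‖x - y‖ :=
            (le_div_iff₀ hr).mp (by linarith : sInf (S x) - t ≤ ‖x - y‖ / r)
          linarith
        have := (div_le_iff₀ hd).mp key2
        linarith
    have := le_csInf (hSne y) hstep
    linarith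
  have htr : ∀ x : X, (minTime F Q x).toReal = sInf (S x) := by
    intro x
    rw [hmt x, ENNReal.toReal_ofReal (hSnn x)]
  constructor
  · intro x
    rw [hmt x]
    exact ENNReal.ofReal_ne_top
  · intro x y
    rw [htr x, htr y, abs_sub_le_iff]
    constructor
    · have := hcore x y; linarith
    · have := hcore y x
      rw [norm_sub_rev] at this
      linarith
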